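/- If T ≻ 0 satisfies P_Ω(T − T̂) = 0 and T⁻¹ = S⁻¹ + Λ with Λ symmetric supported on Ω and S⁻¹ + Λ ≻ 0, then T minimizes −log det T' + tr(S⁻¹T') over all symmetric positive definite T' with P_Ω(T' − T̂) = 0. -/

import Mathlib

open Matrix
open scoped MatrixOrder

/-- trace of a real symmetric matrix equals the sum of its eigenvalues. -/
lemma trace_eq_sum_eigenvalues' {m : ℕ} {A : Matrix (Fin m) (Fin m) ℝ}
    (hA : A.IsHermitian) : A.trace = ∑ i, hA.eigenvalues i := by
  conv_lhs => rw [hA.spectral_theorem, Unitary.conjStarAlgAut_apply]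
  rw [Matrix.trace_mul_comm, ← Matrix.mul_assoc]
  have h1 : (star (hA.eigenvectorUnitary : Matrix (Fin m) (Fin m) ℝ)) *
      (hA.eigenvectorUnitary : Matrix (Fin m) (Fin m) ℝ) = 1 :=
    Unitary.coe_star_mul_self _
  rw [h1, Matrix.one_mul, Matrix.trace_diagonal]
  simp

/-- `log det A ≤ tr A - m` for positive definite `A`. -/
lemma log_det_le_trace {m : ℕ} {A : Matrix (Fin m) (Fin m) ℝ}
    (hA : A.PosDef) : Real.log A.det ≤ A.trace - m := by
  have hH := hA.isHermitian
  have hev : ∀ i, 0 < hH.eigenvalues i := hA.eigenvalues_pos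
  have hdet : A.det = ∏ i, hH.eigenvalues i := by
    simpa using hH.det_eq_prod_eigenvalues
  rw [hdet, trace_eq_sum_eigenvalues' hH,
    Real.log_prod (fun i _ => (hev i).ne')]
  calc ∑ i, Real.log (hH.eigenvalues i)
      ≤ ∑ i, (hH.eigenvalues i - 1) :=
        Finset.sum_le_sum fun i _ => Real.log_le_sub_one_of_pos (hev i)
    _ = (∑ i, hH.eigenvalues i) - m := by
        rw [Finset.sum_sub_distrib]; simp

/-- KKT sufficiency: if `T ≻ 0` is feasible (`P_Ω(T - T̂) = 0`) and `T⁻¹ = S⁻¹ + Λ` for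
some symmetric `Λ` supported on `Ω` with `S⁻¹ + Λ ≻ 0`, then `T` minimizes
`-log det T' + tr(S⁻¹ T')` over feasible positive definite `T'`. -/
theorem KKT_sufficiency {m : ℕ} (S That : Matrix (Fin m) (Fin m) ℝ)
    (hS : S.PosDef) (hThat : That.PosDef)
    (Ω : Set (Fin m × Fin m)) (hΩsymm : ∀ i j, (i, j) ∈ Ω ↔ (j, i) ∈ Ω)
    (T Λ : Matrix (Fin m) (Fin m) ℝ)
    (hT : T.PosDef) (hfeas : ∀ i j, (i, j) ∈ Ω → T i j = That i j)
    (hΛ : Λ.IsSymm) (hΛsupp : ∀ i j, (i, j) ∉ Ω → Λ i j = 0)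
    (hinv : T⁻¹ = S⁻¹ + Λ) (hPD : (S⁻¹ + Λ).PosDef) :
    ∀ T' : Matrix (Fin m) (Fin m) ℝ, T'.PosDef → T'.IsSymm →
      (∀ i j, (i, j) ∈ Ω → T' i j = That i j) →
      -Real.log T.det + Matrix.trace (S⁻¹ * T)
        ≤ -Real.log T'.det + Matrix.trace (S⁻¹ * T') := by
  intro T' hT' hT'symm hfeas'
  -- X = T⁻¹, its square root Q
  set X := T⁻¹ with hX
  have hXpd : X.PosDef := hT.inv
  have hXps : X.PosSemidef := hXpd.posSemidef
  set Q := CFC.sqrt X with hQ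
  have hQps : Q.PosSemidef := (CFC.sqrt_nonneg X).posSemidef
  have hQherm : Q.IsHermitian := hQps.isHermitian
  have hQQ : Q * Q = X := CFC.sqrt_mul_sqrt_self X hXps.nonneg
  have hdetQ : Q.det * Q.det = X.det := by
    rw [← Matrix.det_mul, hQQ]
  have hdetQne : Q.det ≠ 0 := by
    intro h
    have := hXpd.det_pos
    rw [← hdetQ, h, mul_zero] at this
    exact lt_irrefl _ this
  -- A = Q T' Q is positive definite
  have hApd : (Q * T' * Q).PosDef := by
    rw [Matrix.posDef_iff_dotProduct_mulVec]
    constructor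
    · have : (Q * T' * Q)ᴴ = Qᴴ * T'ᴴ * Qᴴ := by
        rw [Matrix.conjTranspose_mul, Matrix.conjTranspose_mul, Matrix.mul_assoc]
      rw [Matrix.IsHermitian, this, hQherm.eq, hT'.isHermitian.eq]
    · intro x hx
      have hQx : Q *ᵥ x ≠ 0 := by
        intro h
        apply hx
        have hinj : Function.Injective (Q.mulVec) :=
          Matrix.mulVec_injective_iff_isUnit.mpr
            ((Matrix.isUnit_iff_isUnit_det _).mpr hdetQne.isUnit)
        have : Q *ᵥ x = Q *ᵥ 0 := by simpa using h
        exact hinj this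
      have key : star x ⬝ᵥ ((Q * T' * Q) *ᵥ x)
          = star (Q *ᵥ x) ⬝ᵥ (T' *ᵥ (Q *ᵥ x)) := by
        simp only [← Matrix.mulVec_mulVec, star_mulVec, hQherm.eq,
          Matrix.dotProduct_mulVec]
      rw [key]
      exact hT'.dotProduct_mulVec_pos hQx
  -- determinant and trace of A
  have hdetT : (0:ℝ) < T.det := hT.det_pos
  have hdetT' : (0:ℝ) < T'.det := hT'.det_pos
  have hdetA : (Q * T' * Q).det = T'.det / T.det := by
    rw [Matrix.det_mul, Matrix.det_mul]
    have : Q.det * T'.det * Q.det = (Q.det * Q.det) * T'.det := by ring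
    rw [this, hdetQ, hX, Matrix.det_nonsing_inv]
    rw [Ring.inverse_eq_inv]
    field_simp
  have htrA : (Q * T' * Q).trace = (X * T').trace := by
    rw [Matrix.mul_assoc, Matrix.trace_mul_comm, Matrix.mul_assoc, hQQ,
      Matrix.trace_mul_comm]
  -- key inequality from log det concavity
  have hkey : Real.log T'.det - Real.log T.det ≤ (X * T').trace - m := by
    have := log_det_le_trace hApd
    rw [hdetA, Real.log_div hdetT'.ne' hdetT.ne', htrA] at this
    exact this
  -- trace of Λ against T and T' agree
  have htrΛ : (Λ * T').trace = (Λ * T).trace := by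
    unfold Matrix.trace
    apply Finset.sum_congr rfl
    intro i _
    show (Λ * T') i i = (Λ * T) i i
    simp only [Matrix.mul_apply]
    apply Finset.sum_congr rfl
    intro j _
    by_cases h : (i, j) ∈ Ω
    · have hji : (j, i) ∈ Ω := (hΩsymm i j).mp h
      rw [hfeas' j i hji, hfeas j i hji]
    · rw [hΛsupp i j h, zero_mul, zero_mul]
  -- S⁻¹ = X - Λ
  have hSinv : S⁻¹ = X - Λ := by
    rw [hinv, add_sub_cancel_right]
  have htrT : (X * T).trace = (m : ℝ) := by
    rw [hX, Matrix.nonsing_inv_mul T hT.det_pos.ne'.isUnit, Matrix.trace_one]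
    simp
  -- expand the traces
  have e1 : Matrix.trace (S⁻¹ * T) = (m : ℝ) - (Λ * T).trace := by
    rw [hSinv, Matrix.sub_mul, Matrix.trace_sub, htrT]
  have e2 : Matrix.trace (S⁻¹ * T') = (X * T').trace - (Λ * T).trace := by
    rw [hSinv, Matrix.sub_mul, Matrix.trace_sub, htrΛ]
  rw [e1, e2]
  linarith [hkey]
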